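/- Let A be an almost commutative local ring with maximal ideal m which is separated, i.e. ⋂ₙ mⁿ = {0}. Let f ∈ A[x] be monic with reduction f̄ = f₁f₂ for relatively prime monic polynomials f₁, f₂ ∈ k[x]. If f = F₁F₂ = G₁G₂ where F₁, F₂, G₁, G₂ ∈ A[x] are monic with F̄₁ = Ḡ₁ = f₁ and F̄₂ = Ḡ₂ = f₂, then F₁ = G₁ and F₂ = G₂. -/

import Mathlib

open Polynomial

/-- The `n`-th power of a two-sided ideal, given as a set `m` in a (possibly non-commutative)
ring `A`, realized as an additive subgroup: `m ^ 0 = A` and `m ^ (n+1)` is the additive group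
generated by products `a * b` with `a ∈ m`, `b ∈ m ^ n`. -/
def idealPow {A : Type*} [Ring A] (m : Set A) : ℕ → AddSubgroup A
  | 0 => ⊤
  | n + 1 => AddSubgroup.closure {x | ∃ a ∈ m, ∃ b ∈ idealPow m n, x = a * b}

abbrev mSet (A : Type*) [Ring A] : Set A := {a : A | ¬ IsUnit a}

section Aux
variable {A : Type*} [Ring A] {K : Type*} [Field K]

theorem idealPow_zero (m : Set A) : idealPow m 0 = ⊤ := by rw [idealPow]

theorem idealPow_succ (m : Set A) (n : ℕ) :
    idealPow m (n + 1)
      = AddSubgroup.closure {x | ∃ a ∈ m, ∃ b ∈ idealPow m n, x = a * b} := by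
  rw [idealPow]

theorem mem_ip_top {a : A} (m : Set A) : a ∈ idealPow m 0 := by
  rw [idealPow_zero]; trivial

variable (π : A →+* K) (hπker : ∀ a : A, π a = 0 ↔ ¬ IsUnit a)
include π hπker

theorem mem_succ_of_mul {a b : A} {n : ℕ} (ha : π a = 0) (hb : b ∈ idealPow (mSet A) n) :
    a * b ∈ idealPow (mSet A) (n + 1) := by
  rw [idealPow_succ]
  exact AddSubgroup.subset_closure ⟨a, (hπker a).mp ha, b, hb, rfl⟩

theorem ip_mul_left {n : ℕ} (c : A) {a : A} (ha : a ∈ idealPow (mSet A) n) :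
    c * a ∈ idealPow (mSet A) n := by
  cases n with
  | zero => exact mem_ip_top _
  | succ n =>
    revert ha
    have : idealPow (mSet A) (n+1) ≤
        (idealPow (mSet A) (n+1)).comap (AddMonoidHom.mulLeft c) := by
      rw [idealPow_succ]
      refine AddSubgroup.closure_le _ |>.mpr ?_
      rintro x ⟨a, ha, b, hb, rfl⟩
      show c * (a * b) ∈ idealPow (mSet A) (n+1)
      rw [← mul_assoc]
      exact mem_succ_of_mul π hπker (by rw [map_mul, (hπker a).mpr ha, mul_zero]) hb
    exact fun ha => this ha

theorem ip_mul_right {n : ℕ} (c : A) : ∀ {a : A}, a ∈ idealPow (mSet A) n →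
    a * c ∈ idealPow (mSet A) n := by
  induction n with
  | zero => intro a _; exact mem_ip_top _
  | succ n ih =>
    intro a ha
    revert ha
    have : idealPow (mSet A) (n+1) ≤
        (idealPow (mSet A) (n+1)).comap (AddMonoidHom.mulRight c) := by
      rw [idealPow_succ]
      refine AddSubgroup.closure_le _ |>.mpr ?_
      rintro x ⟨a, ha, b, hb, rfl⟩
      show a * b * c ∈ idealPow (mSet A) (n+1)
      rw [mul_assoc]
      exact mem_succ_of_mul π hπker ((hπker a).mpr ha) (ih hb)
    exact fun ha => this ha

theorem ip_le_succ {n : ℕ} {a : A} (ha : a ∈ idealPow (mSet A) (n+1)) :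
    a ∈ idealPow (mSet A) n := by
  revert ha
  have : idealPow (mSet A) (n+1) ≤ idealPow (mSet A) n := by
    rw [idealPow_succ]
    refine AddSubgroup.closure_le _ |>.mpr ?_
    rintro x ⟨a, ha, b, hb, rfl⟩
    exact ip_mul_left π hπker a hb
  exact fun ha => this ha

theorem pi_zero_of_mem_one {a : A} (h : a ∈ idealPow (mSet A) 1) : π a = 0 := by
  revert h
  have : idealPow (mSet A) 1 ≤ AddMonoidHom.ker (π : A →+* K).toAddMonoidHom := by
    rw [idealPow_succ]
    refine AddSubgroup.closure_le _ |>.mpr ?_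
    rintro x ⟨a, ha, b, _, rfl⟩
    show π (a * b) = 0
    rw [map_mul, (hπker a).mpr ha, zero_mul]
  exact fun h => this h

theorem ip_mul_right_m {n : ℕ} : ∀ {a b : A}, a ∈ idealPow (mSet A) n → π b = 0 →
    a * b ∈ idealPow (mSet A) (n + 1) := by
  induction n with
  | zero =>
    intro a b _ hb
    have h1 : b ∈ idealPow (mSet A) 1 := by
      have := mem_succ_of_mul π hπker (b := (1:A)) (n := 0) hb (mem_ip_top _)
      simpa using this
    exact ip_mul_left π hπker a h1
  | succ n ih =>
    intro a b ha hb
    revert ha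
    have : idealPow (mSet A) (n+1) ≤
        (idealPow (mSet A) (n+2)).comap (AddMonoidHom.mulRight b) := by
      rw [idealPow_succ]
      refine AddSubgroup.closure_le _ |>.mpr ?_
      rintro x ⟨a, ha, c, hc, rfl⟩
      show a * c * b ∈ idealPow (mSet A) (n+2)
      rw [mul_assoc]
      exact mem_succ_of_mul π hπker ((hπker a).mpr ha) (ih hc hb)
    exact fun ha => this ha

theorem ip_commutator (hac : ∀ i j : ℕ, ∀ a ∈ idealPow (mSet A) i,
      ∀ b ∈ idealPow (mSet A) j,
        a * b - b * a ∈ idealPow (mSet A) (i + j + 1))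
    {n : ℕ} {a : A} (ha : a ∈ idealPow (mSet A) n) (b : A) :
    a * b - b * a ∈ idealPow (mSet A) (n + 1) := by
  simpa using hac n 0 a ha b (mem_ip_top _)

end Aux

section Poly
variable {A : Type*} [Ring A] {K : Type*} [Field K]

theorem coeffs_mul {p q : A[X]} {G : AddSubgroup A}
    (h : ∀ i j, p.coeff i * q.coeff j ∈ G) : ∀ i, (p * q).coeff i ∈ G := by
  intro i
  rw [Polynomial.coeff_mul]
  exact AddSubgroup.sum_mem _ fun x _ => h x.1 x.2

variable (π : A →+* K) (hπker : ∀ a : A, π a = 0 ↔ ¬ IsUnit a)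
include π hπker

theorem comm_poly (hac : ∀ i j : ℕ, ∀ a ∈ idealPow (mSet A) i,
      ∀ b ∈ idealPow (mSet A) j,
        a * b - b * a ∈ idealPow (mSet A) (i + j + 1))
    {n : ℕ} {p : A[X]} (hp : ∀ i, p.coeff i ∈ idealPow (mSet A) n) (q : A[X]) :
    ∀ i, (p * q - q * p).coeff i ∈ idealPow (mSet A) (n + 1) := by
  intro i
  rw [Polynomial.coeff_sub, Polynomial.coeff_mul, Polynomial.coeff_mul]
  have : ∑ x ∈ Finset.HasAntidiagonal.antidiagonal i, q.coeff x.1 * p.coeff x.2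
      = ∑ x ∈ Finset.HasAntidiagonal.antidiagonal i, q.coeff x.2 * p.coeff x.1 := by
    exact Finset.sum_equiv (Equiv.prodComm ℕ ℕ)
      (by simp [Finset.mem_antidiagonal, add_comm]) (by simp)
  rw [this, ← Finset.sum_sub_distrib]
  exact AddSubgroup.sum_mem _ fun x _ =>
    ip_commutator π hπker hac (hp x.1) (q.coeff x.2)

omit π hπker in
theorem down_lemma {F W : A[X]} {J : AddSubgroup A} (hF : F.Monic)
    (hJr : ∀ c : A, ∀ a ∈ J, a * c ∈ J)
    (hWF : ∀ i, (W * F).coeff (F.natDegree + i) ∈ J) : ∀ i, W.coeff i ∈ J := by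
  have key : ∀ i : ℕ, (∀ a, i < a → W.coeff a ∈ J) → W.coeff i ∈ J := by
    intro i hcoe
    have h := hWF i
    rw [Polynomial.coeff_mul] at h
    have hmem : ((i, F.natDegree) : ℕ × ℕ) ∈ Finset.HasAntidiagonal.antidiagonal (F.natDegree + i) := by
      simp [Nat.add_comm]
    rw [← Finset.add_sum_erase _ _ hmem] at h
    simp only [hF.coeff_natDegree, mul_one] at h
    have hsum : ∑ x ∈ (Finset.HasAntidiagonal.antidiagonal (F.natDegree + i)).erase (i, F.natDegree),
        W.coeff x.1 * F.coeff x.2 ∈ J := by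
      refine AddSubgroup.sum_mem _ fun x hx => ?_
      rcases Finset.mem_erase.mp hx with ⟨hne, hx'⟩
      rcases Finset.HasAntidiagonal.mem_antidiagonal.mp hx' with hadd
      rcases lt_trichotomy i x.1 with hlt | heq | hgt
      · exact hJr _ _ (hcoe _ hlt)
      · exact absurd (Prod.ext heq.symm (by omega)) hne
      · have : F.natDegree < x.2 := by omega
        rw [Polynomial.coeff_eq_zero_of_natDegree_lt this, mul_zero]
        exact zero_mem _
    have : W.coeff i = (W.coeff i + ∑ x ∈ (Finset.HasAntidiagonal.antidiagonal (F.natDegree + i)).erase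
        (i, F.natDegree), W.coeff x.1 * F.coeff x.2) - ∑ x ∈ (Finset.HasAntidiagonal.antidiagonal
        (F.natDegree + i)).erase (i, F.natDegree), W.coeff x.1 * F.coeff x.2 := (add_sub_cancel_right _ _).symm
    rw [this]
    exact sub_mem h hsum
  have all : ∀ k : ℕ, ∀ i : ℕ, W.natDegree ≤ i + k → W.coeff i ∈ J := by
    intro k
    induction k with
    | zero =>
      intro i hi
      refine key i fun a ha => ?_
      rw [Polynomial.coeff_eq_zero_of_natDegree_lt (by omega)]
      exact zero_mem _
    | succ k ih =>
      intro i hi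
      exact key i fun a ha => ih a (by omega)
  exact fun i => all W.natDegree i (by omega)

end Poly

/-- Let `A` be a (possibly non-commutative) local ring, i.e. the non-invertible elements form a
two-sided ideal `m`; this is encoded by a surjective ring homomorphism `π : A → K` onto the
residue field `K` whose kernel is exactly the set of non-units (so `m = ker π`).  Assume `A` is
almost commutative (the associated graded ring `gr(A) = ⊕ mⁱ/mⁱ⁺¹` is commutative, i.e.
`a * b - b * a ∈ m^(i+j+1)` for `a ∈ mⁱ`, `b ∈ mʲ`) and separated (`⋂ₙ mⁿ = {0}`).  Let
`f ∈ A[x]` be monic with reduction `f̄ = f₁ * f₂` for relatively prime monic polynomials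
`f₁, f₂ ∈ K[x]`.  If `f = F₁F₂ = G₁G₂` where `F₁, F₂, G₁, G₂ ∈ A[x]` are monic with
`F̄₁ = Ḡ₁ = f₁` and `F̄₂ = Ḡ₂ = f₂`, then `F₁ = G₁` and `F₂ = G₂`. -/
theorem uniqueness_of_henselian_factorization
    {A : Type*} [Ring A] {K : Type*} [Field K]
    (π : A →+* K) (hπsurj : Function.Surjective π)
    (hπker : ∀ a : A, π a = 0 ↔ ¬ IsUnit a)
    -- almost commutative
    (hac : ∀ i j : ℕ, ∀ a ∈ idealPow {a : A | ¬ IsUnit a} i,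
      ∀ b ∈ idealPow {a : A | ¬ IsUnit a} j,
        a * b - b * a ∈ idealPow {a : A | ¬ IsUnit a} (i + j + 1))
    -- separated: `⋂ₙ mⁿ = {0}`
    (hsep : ∀ x : A, (∀ n : ℕ, x ∈ idealPow {a : A | ¬ IsUnit a} n) → x = 0)
    (f : A[X]) (hf : f.Monic) (f₁ f₂ : K[X])
    (hf₁ : f₁.Monic) (hf₂ : f₂.Monic) (hcop : IsCoprime f₁ f₂)
    (hred : f.map π = f₁ * f₂)
    (F₁ F₂ G₁ G₂ : A[X])
    (hF₁ : F₁.Monic) (hF₂ : F₂.Monic) (hG₁ : G₁.Monic) (hG₂ : G₂.Monic)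
    (hfF : f = F₁ * F₂) (hfG : f = G₁ * G₂)
    (hF₁red : F₁.map π = f₁) (hG₁red : G₁.map π = f₁)
    (hF₂red : F₂.map π = f₂) (hG₂red : G₂.map π = f₂) :
    F₁ = G₁ ∧ F₂ = G₂ := by
  classical
  obtain ⟨u, v, huv⟩ := hcop
  obtain ⟨U, hU⟩ := Polynomial.map_surjective π hπsurj u
  obtain ⟨V, hV⟩ := Polynomial.map_surjective π hπsurj v
  set D₁ : A[X] := F₁ - G₁ with hD₁def
  set D₂ : A[X] := F₂ - G₂ with hD₂def
  set E : A[X] := U * F₁ + V * F₂ - 1 with hEdef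
  have hπD₁ : ∀ i, π (D₁.coeff i) = 0 := by
    intro i
    have : D₁.map π = 0 := by
      rw [hD₁def, Polynomial.map_sub, hF₁red, hG₁red, sub_self]
    have h := congrArg (fun p => Polynomial.coeff p i) this
    simpa [Polynomial.coeff_map] using h
  have hπD₂ : ∀ i, π (D₂.coeff i) = 0 := by
    intro i
    have : D₂.map π = 0 := by
      rw [hD₂def, Polynomial.map_sub, hF₂red, hG₂red, sub_self]
    have h := congrArg (fun p => Polynomial.coeff p i) this
    simpa [Polynomial.coeff_map] using h
  have hπE : ∀ i, π (E.coeff i) = 0 := by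
    intro i
    have : E.map π = 0 := by
      rw [hEdef, Polynomial.map_sub, Polynomial.map_add, Polynomial.map_mul,
        Polynomial.map_mul, Polynomial.map_one, hU, hV, hF₁red, hF₂red, huv, sub_self]
    have h := congrArg (fun p => Polynomial.coeff p i) this
    simpa [Polynomial.coeff_map] using h
  have hπG₂F₂ : ∀ i, π ((G₂ - F₂).coeff i) = 0 := by
    intro i
    rw [Polynomial.coeff_sub, map_sub]
    have := hπD₂ i
    rw [hD₂def, Polynomial.coeff_sub, map_sub, sub_eq_zero] at this
    rw [this, sub_self]
  have hπG₁F₁ : ∀ i, π ((G₁ - F₁).coeff i) = 0 := by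
    intro i
    rw [Polynomial.coeff_sub, map_sub]
    have := hπD₁ i
    rw [hD₁def, Polynomial.coeff_sub, map_sub, sub_eq_zero] at this
    rw [this, sub_self]
  -- degrees
  have hdF₁ : F₁.natDegree = f₁.natDegree := by rw [← hF₁red, hF₁.natDegree_map]
  have hdG₁ : G₁.natDegree = f₁.natDegree := by rw [← hG₁red, hG₁.natDegree_map]
  have hdF₂ : F₂.natDegree = f₂.natDegree := by rw [← hF₂red, hF₂.natDegree_map]
  have hdG₂ : G₂.natDegree = f₂.natDegree := by rw [← hG₂red, hG₂.natDegree_map]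
  have hD₁deg : ∀ j, F₁.natDegree ≤ j → D₁.coeff j = 0 := by
    intro j hj
    rw [hD₁def, Polynomial.coeff_sub]
    rcases eq_or_lt_of_le hj with h | h
    · rw [← h, hF₁.coeff_natDegree]
      have : G₁.natDegree = F₁.natDegree := by rw [hdG₁, hdF₁]
      rw [show F₁.natDegree = G₁.natDegree from this.symm, hG₁.coeff_natDegree, sub_self]
    · rw [Polynomial.coeff_eq_zero_of_natDegree_lt h,
        Polynomial.coeff_eq_zero_of_natDegree_lt (by rw [hdG₁, ← hdF₁]; exact h), sub_self]
  have hD₂deg : ∀ j, F₂.natDegree ≤ j → D₂.coeff j = 0 := by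
    intro j hj
    rw [hD₂def, Polynomial.coeff_sub]
    rcases eq_or_lt_of_le hj with h | h
    · rw [← h, hF₂.coeff_natDegree]
      have : G₂.natDegree = F₂.natDegree := by rw [hdG₂, hdF₂]
      rw [show F₂.natDegree = G₂.natDegree from this.symm, hG₂.coeff_natDegree, sub_self]
    · rw [Polynomial.coeff_eq_zero_of_natDegree_lt h,
        Polynomial.coeff_eq_zero_of_natDegree_lt (by rw [hdG₂, ← hdF₂]; exact h), sub_self]
  -- the two basic factorization identities
  have hFG : F₁ * F₂ = G₁ * G₂ := by rw [← hfF, ← hfG]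
  have fact0 : D₁ * F₂ + G₁ * D₂ = 0 := by
    rw [hD₁def, hD₂def, sub_mul, mul_sub, hFG]; abel
  have fact0' : F₁ * D₂ + D₁ * G₂ = 0 := by
    rw [hD₁def, hD₂def, sub_mul, mul_sub, hFG]; abel
  -- main induction
  have main : ∀ n : ℕ, (∀ i, D₁.coeff i ∈ idealPow (mSet A) n) ∧
      (∀ i, D₂.coeff i ∈ idealPow (mSet A) n) := by
    intro n
    induction n with
    | zero => exact ⟨fun _ => mem_ip_top _, fun _ => mem_ip_top _⟩
    | succ n ih =>
      obtain ⟨h1, h2⟩ := ih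
      -- first factor
      have hD₁succ : ∀ i, D₁.coeff i ∈ idealPow (mSet A) (n + 1) := by
        set W : A[X] := U * D₁ - V * D₂ with hWdef
        have hWn : ∀ i, W.coeff i ∈ idealPow (mSet A) n := by
          intro i
          rw [hWdef, Polynomial.coeff_sub]
          exact sub_mem (coeffs_mul (fun a b => ip_mul_left π hπker _ (h1 b)) i)
            (coeffs_mul (fun a b => ip_mul_left π hπker _ (h2 b)) i)
        have hT : ∀ i, (D₁ - W * F₁).coeff i ∈ idealPow (mSet A) (n + 1) := by
          have hid : D₁ - W * F₁ =
              -(D₁ * E) + (D₁ * U - U * D₁) * F₁ + (D₁ * V - V * D₁) * F₂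
                - V * ((G₁ - F₁) * D₂) - V * (F₁ * D₂ - D₂ * F₁)
                + V * (D₁ * F₂ + G₁ * D₂) := by
            rw [hWdef, hD₁def, hD₂def, hEdef]
            noncomm_ring
          rw [hid, fact0, mul_zero, add_zero]
          intro i
          simp only [Polynomial.coeff_add, Polynomial.coeff_sub, Polynomial.coeff_neg]
          refine sub_mem (sub_mem (add_mem (add_mem (neg_mem ?_) ?_) ?_) ?_) ?_
          · exact coeffs_mul (fun a b => ip_mul_right_m π hπker (h1 a) (hπE b)) i
          · exact coeffs_mul
              (fun a b => ip_mul_right π hπker _ (comm_poly π hπker hac h1 U a)) i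
          · exact coeffs_mul
              (fun a b => ip_mul_right π hπker _ (comm_poly π hπker hac h1 V a)) i
          · refine coeffs_mul (fun a b => ip_mul_left π hπker _ ?_) i
            exact coeffs_mul (fun c d => mem_succ_of_mul π hπker (hπG₁F₁ c) (h2 d)) b
          · refine coeffs_mul (fun a b => ip_mul_left π hπker _ ?_) i
            have := comm_poly π hπker hac h2 F₁ b
            have h' : (F₁ * D₂ - D₂ * F₁).coeff b
                = -((D₂ * F₁ - F₁ * D₂).coeff b) := by
              rw [Polynomial.coeff_sub, Polynomial.coeff_sub]; abel
            rw [h']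
            exact neg_mem this
        have hWF : ∀ i, (W * F₁).coeff (F₁.natDegree + i) ∈ idealPow (mSet A) (n + 1) := by
          intro i
          have h0 : D₁.coeff (F₁.natDegree + i) = 0 := hD₁deg _ (Nat.le_add_right _ _)
          have := hT (F₁.natDegree + i)
          rw [Polynomial.coeff_sub, h0, zero_sub] at this
          simpa using neg_mem this
        have hWsucc : ∀ i, W.coeff i ∈ idealPow (mSet A) (n + 1) :=
          down_lemma hF₁ (fun c a ha => ip_mul_right π hπker c ha) hWF
        intro i
        have hWFmem : (W * F₁).coeff i ∈ idealPow (mSet A) (n + 1) :=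
          coeffs_mul (fun a b => ip_mul_right π hπker _ (hWsucc a)) i
        have : D₁.coeff i = (D₁ - W * F₁).coeff i + (W * F₁).coeff i := by
          simp [Polynomial.coeff_sub]
        rw [this]
        exact add_mem (hT i) hWFmem
      -- second factor
      have hD₂succ : ∀ i, D₂.coeff i ∈ idealPow (mSet A) (n + 1) := by
        set W : A[X] := V * D₂ - U * D₁ with hWdef
        have hT : ∀ i, (D₂ - W * F₂).coeff i ∈ idealPow (mSet A) (n + 1) := by
          have hid : D₂ - W * F₂ =
              -(D₂ * E) + (D₂ * V - V * D₂) * F₂ + (D₂ * U - U * D₂) * F₁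
                + U * (D₂ * F₁ - F₁ * D₂) - U * (D₁ * (G₂ - F₂))
                + U * (F₁ * D₂ + D₁ * G₂) := by
            rw [hWdef, hD₁def, hD₂def, hEdef]
            noncomm_ring
          rw [hid, fact0', mul_zero, add_zero]
          intro i
          simp only [Polynomial.coeff_add, Polynomial.coeff_sub, Polynomial.coeff_neg]
          refine sub_mem (add_mem (add_mem (add_mem (neg_mem ?_) ?_) ?_) ?_) ?_
          · exact coeffs_mul (fun a b => ip_mul_right_m π hπker (h2 a) (hπE b)) i
          · exact coeffs_mul
              (fun a b => ip_mul_right π hπker _ (comm_poly π hπker hac h2 V a)) i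
          · exact coeffs_mul
              (fun a b => ip_mul_right π hπker _ (comm_poly π hπker hac h2 U a)) i
          · exact coeffs_mul
              (fun a b => ip_mul_left π hπker _ (comm_poly π hπker hac h2 F₁ b)) i
          · refine coeffs_mul (fun a b => ip_mul_left π hπker _ ?_) i
            exact coeffs_mul (fun c d => ip_mul_right_m π hπker (h1 c) (hπG₂F₂ d)) b
        have hWn : ∀ i, W.coeff i ∈ idealPow (mSet A) n := by
          intro i
          rw [hWdef, Polynomial.coeff_sub]
          exact sub_mem (coeffs_mul (fun a b => ip_mul_left π hπker _ (h2 b)) i)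
            (coeffs_mul (fun a b => ip_mul_left π hπker _ (h1 b)) i)
        have hWF : ∀ i, (W * F₂).coeff (F₂.natDegree + i) ∈ idealPow (mSet A) (n + 1) := by
          intro i
          have h0 : D₂.coeff (F₂.natDegree + i) = 0 := hD₂deg _ (Nat.le_add_right _ _)
          have := hT (F₂.natDegree + i)
          rw [Polynomial.coeff_sub, h0, zero_sub] at this
          simpa using neg_mem this
        have hWsucc : ∀ i, W.coeff i ∈ idealPow (mSet A) (n + 1) :=
          down_lemma hF₂ (fun c a ha => ip_mul_right π hπker c ha) hWF
        intro i
        have hWFmem : (W * F₂).coeff i ∈ idealPow (mSet A) (n + 1) :=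
          coeffs_mul (fun a b => ip_mul_right π hπker _ (hWsucc a)) i
        have : D₂.coeff i = (D₂ - W * F₂).coeff i + (W * F₂).coeff i := by
          simp [Polynomial.coeff_sub]
        rw [this]
        exact add_mem (hT i) hWFmem
      exact ⟨hD₁succ, hD₂succ⟩
  have hD₁0 : D₁ = 0 := by
    apply Polynomial.ext
    intro i
    rw [Polynomial.coeff_zero]
    exact hsep _ fun n => (main n).1 i
  have hD₂0 : D₂ = 0 := by
    apply Polynomial.ext
    intro i
    rw [Polynomial.coeff_zero]
    exact hsep _ fun n => (main n).2 i
  rw [hD₁def] at hD₁0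
  rw [hD₂def] at hD₂0
  exact ⟨sub_eq_zero.mp hD₁0, sub_eq_zero.mp hD₂0⟩
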